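/- Let X have law N(μ, Σ) with Σ positive definite, and Z have law N(μ, β²Σ) with β² = (2-λ)/λ for λ ∈ (0,1), with X and Z independent. Then (1-λ)X + λZ has the same law as X, and consequently E[s(Z)] = E[f(X)], where s is the surrogate loss defined from f, λ, and the density of X. -/

import Mathlib

open MeasureTheory ProbabilityTheory

noncomputable def stdGaussian (d : ℕ) : Measure (EuclideanSpace ℝ (Fin d)) :=
  (Measure.pi fun _ : Fin d => gaussianReal 0 1).map
    (MeasurableEquiv.toLp 2 (Fin d → ℝ))

/-- The Gaussian measure `N(μ, S)` on `ℝ^d`, realised as the law of `μ + S^{1/2} W`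
for `W` standard Gaussian. -/
noncomputable def gaussianMeasure {d : ℕ} (μ : EuclideanSpace ℝ (Fin d))
    {S : Matrix (Fin d) (Fin d) ℝ} (hS : S.PosSemidef) :
    Measure (EuclideanSpace ℝ (Fin d)) :=
  (stdGaussian d).map (fun w => μ + Matrix.toEuclideanLin
    ((hS.1.eigenvectorUnitary : Matrix (Fin d) (Fin d) ℝ) *
      Matrix.diagonal (fun i => Real.sqrt (hS.1.eigenvalues i)) *
      (star hS.1.eigenvectorUnitary : Matrix (Fin d) (Fin d) ℝ)) w)

noncomputable def Matrix.PosSemidef.sqrt {d : ℕ} {S : Matrix (Fin d) (Fin d) ℝ}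
    (hS : S.PosSemidef) : Matrix (Fin d) (Fin d) ℝ :=
  (hS.1.eigenvectorUnitary : Matrix (Fin d) (Fin d) ℝ) *
    Matrix.diagonal (fun i => Real.sqrt (hS.1.eigenvalues i)) *
    (star hS.1.eigenvectorUnitary : Matrix (Fin d) (Fin d) ℝ)

lemma gaussianMeasure_eq {d : ℕ} (μ : EuclideanSpace ℝ (Fin d))
    {S : Matrix (Fin d) (Fin d) ℝ} (hS : S.PosSemidef) :
    gaussianMeasure μ hS = (stdGaussian d).map (fun w => μ + Matrix.toEuclideanLin hS.sqrt w) :=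
  rfl

open scoped MatrixOrder in
lemma Matrix.PosSemidef.sqrt_eq_cfc' {d : ℕ} {S : Matrix (Fin d) (Fin d) ℝ}
    (hS : S.PosSemidef) : hS.sqrt = CFC.sqrt S := by
  rw [CFC.sqrt_eq_cfc, cfc_nnreal_eq_real _ S hS.nonneg, hS.1.cfc_eq]
  unfold Matrix.IsHermitian.cfc Matrix.PosSemidef.sqrt
  simp [Function.comp_def, Real.coe_sqrt,
    Real.coe_toNNReal', max_eq_left (hS.eigenvalues_nonneg _)]

open Real Set
open scoped NNReal ENNReal

section Aux

lemma gaussianPDFReal_conv (v₁ v₂ : ℝ≥0) (h1 : v₁ ≠ 0) (h2 : v₂ ≠ 0) (z : ℝ) :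
    ∫ x, gaussianPDFReal 0 v₁ x * gaussianPDFReal 0 v₂ (z - x)
      = gaussianPDFReal 0 (v₁ + v₂) z := by
  set a : ℝ := (v₁ : ℝ) with ha_def
  set b : ℝ := (v₂ : ℝ) with hb_def
  have ha : 0 < a := lt_of_le_of_ne v₁.coe_nonneg (by simpa [ha_def, eq_comm] using h1)
  have hb : 0 < b := lt_of_le_of_ne v₂.coe_nonneg (by simpa [hb_def, eq_comm] using h2)
  have ha' : a ≠ 0 := ha.ne'
  have hb' : b ≠ 0 := hb.ne'
  have hab : a + b ≠ 0 := by positivity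
  have hk : (0:ℝ) < (a + b) / (2 * a * b) := by positivity
  have hpoint : ∀ x, gaussianPDFReal 0 v₁ x * gaussianPDFReal 0 v₂ (z - x)
      = ((√(2 * π * a))⁻¹ * (√(2 * π * b))⁻¹ * rexp (-(z ^ 2 / (2 * (a + b)))))
        * rexp (-((a + b) / (2 * a * b)) * (x - a * z / (a + b)) ^ 2) := by
    intro x
    have hexp : rexp (-(x - 0) ^ 2 / (2 * a)) * rexp (-(z - x - 0) ^ 2 / (2 * b))
        = rexp (-(z ^ 2 / (2 * (a + b))))
          * rexp (-((a + b) / (2 * a * b)) * (x - a * z / (a + b)) ^ 2) := by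
      rw [← Real.exp_add, ← Real.exp_add]
      congr 1
      field_simp
      ring
    simp only [gaussianPDFReal, ← ha_def, ← hb_def]
    calc (√(2 * π * a))⁻¹ * rexp (-(x - 0) ^ 2 / (2 * a))
        * ((√(2 * π * b))⁻¹ * rexp (-(z - x - 0) ^ 2 / (2 * b)))
        = (√(2 * π * a))⁻¹ * (√(2 * π * b))⁻¹
          * (rexp (-(x - 0) ^ 2 / (2 * a)) * rexp (-(z - x - 0) ^ 2 / (2 * b))) := by ring
      _ = _ := by rw [hexp]; ring
  rw [integral_congr_ae (Filter.Eventually.of_forall hpoint), integral_const_mul]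
  have hshift : ∫ x, rexp (-((a + b) / (2 * a * b)) * (x - a * z / (a + b)) ^ 2)
      = ∫ x, rexp (-((a + b) / (2 * a * b)) * x ^ 2) :=
    integral_sub_right_eq_self (fun x => rexp (-((a + b) / (2 * a * b)) * x ^ 2)) (a * z / (a + b))
  rw [hshift, integral_gaussian]
  have hconst : (√(2 * π * a))⁻¹ * (√(2 * π * b))⁻¹ * √(π / ((a + b) / (2 * a * b)))
      = (√(2 * π * (a + b)))⁻¹ := by
    have h1' : π / ((a + b) / (2 * a * b)) = 2 * π * a * (2 * π * b) * (2 * π * (a + b))⁻¹ := by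
      field_simp
    have h2' : √(2 * π * a * (2 * π * b) * (2 * π * (a + b))⁻¹)
        = √(2 * π * a) * √(2 * π * b) * (√(2 * π * (a + b)))⁻¹ := by
      rw [Real.sqrt_mul (by positivity) ((2 * π * (a + b))⁻¹),
        Real.sqrt_mul (by positivity) (2 * π * b), Real.sqrt_inv]
    rw [h1', h2']
    have hsa : √(2 * π * a) ≠ 0 := by positivity
    have hsb : √(2 * π * b) ≠ 0 := by positivity
    field_simp
  have hcoe : ((v₁ + v₂ : ℝ≥0) : ℝ) = a + b := by push_cast; ring
  rw [gaussianPDFReal, hcoe]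
  rw [show ((√(2 * π * a))⁻¹ * (√(2 * π * b))⁻¹ * rexp (-(z ^ 2 / (2 * (a + b)))))
        * √(π / ((a + b) / (2 * a * b)))
      = ((√(2 * π * a))⁻¹ * (√(2 * π * b))⁻¹ * √(π / ((a + b) / (2 * a * b))))
        * rexp (-(z ^ 2 / (2 * (a + b)))) from by ring,
    hconst]
  congr 1
  ring

lemma gaussianPDFReal_le (μ : ℝ) (v : ℝ≥0) (x : ℝ) :
    gaussianPDFReal μ v x ≤ (√(2 * π * v))⁻¹ := by
  rw [gaussianPDFReal]
  have h1 : rexp (-(x - μ) ^ 2 / (2 * v)) ≤ 1 := by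
    rw [Real.exp_le_one_iff, neg_div]
    exact neg_nonpos.mpr (div_nonneg (sq_nonneg _) (by positivity))
  calc (√(2 * π * v))⁻¹ * rexp (-(x - μ) ^ 2 / (2 * v)) ≤ (√(2 * π * v))⁻¹ * 1 := by
        apply mul_le_mul_of_nonneg_left h1 (by positivity)
    _ = _ := mul_one _

lemma lintegral_gaussianPDF_conv (v₁ v₂ : ℝ≥0) (h1 : v₁ ≠ 0) (h2 : v₂ ≠ 0) (z : ℝ) :
    ∫⁻ x, gaussianPDF 0 v₁ x * gaussianPDF 0 v₂ (z - x) = gaussianPDF 0 (v₁ + v₂) z := by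
  have hmg : Measurable fun x => gaussianPDFReal 0 v₁ x * gaussianPDFReal 0 v₂ (z - x) :=
    (measurable_gaussianPDFReal 0 v₁).mul
      ((measurable_gaussianPDFReal 0 v₂).comp (measurable_const.sub measurable_id))
  have hint : Integrable (fun x => gaussianPDFReal 0 v₁ x * gaussianPDFReal 0 v₂ (z - x)) := by
    refine Integrable.mono ((integrable_gaussianPDFReal 0 v₁).const_mul (√(2 * π * v₂))⁻¹)
      hmg.aestronglyMeasurable (ae_of_all _ fun x => ?_)
    have hnn : 0 ≤ gaussianPDFReal 0 v₁ x * gaussianPDFReal 0 v₂ (z - x) :=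
      mul_nonneg (gaussianPDFReal_nonneg _ _ _) (gaussianPDFReal_nonneg _ _ _)
    rw [Real.norm_eq_abs, abs_of_nonneg hnn, Real.norm_eq_abs]
    calc gaussianPDFReal 0 v₁ x * gaussianPDFReal 0 v₂ (z - x)
        ≤ gaussianPDFReal 0 v₁ x * (√(2 * π * v₂))⁻¹ :=
          mul_le_mul_of_nonneg_left (gaussianPDFReal_le _ _ _) (gaussianPDFReal_nonneg _ _ _)
      _ = (√(2 * π * v₂))⁻¹ * gaussianPDFReal 0 v₁ x := mul_comm _ _
      _ ≤ |(√(2 * π * v₂))⁻¹ * gaussianPDFReal 0 v₁ x| := le_abs_self _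
  calc ∫⁻ x, gaussianPDF 0 v₁ x * gaussianPDF 0 v₂ (z - x)
      = ∫⁻ x, ENNReal.ofReal (gaussianPDFReal 0 v₁ x * gaussianPDFReal 0 v₂ (z - x)) := by
        simp_rw [gaussianPDF,
          ENNReal.ofReal_mul (gaussianPDFReal_nonneg 0 v₁ _)]
    _ = ENNReal.ofReal (∫ x, gaussianPDFReal 0 v₁ x * gaussianPDFReal 0 v₂ (z - x)) :=
        (ofReal_integral_eq_lintegral_ofReal hint (ae_of_all _ fun x =>
          mul_nonneg (gaussianPDFReal_nonneg _ _ _) (gaussianPDFReal_nonneg _ _ _))).symm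
    _ = gaussianPDF 0 (v₁ + v₂) z := by rw [gaussianPDFReal_conv v₁ v₂ h1 h2 z]; rfl

lemma gaussianReal_conv (v₁ v₂ : ℝ≥0) :
    Measure.map (fun p : ℝ × ℝ => p.1 + p.2)
      ((gaussianReal 0 v₁).prod (gaussianReal 0 v₂)) = gaussianReal 0 (v₁ + v₂) := by
  by_cases h1 : v₁ = 0
  · subst h1
    rw [gaussianReal_zero_var, Measure.dirac_prod,
      Measure.map_map measurable_add measurable_prodMk_left]
    simp only [Function.comp_def, zero_add, Measure.map_id']
  by_cases h2 : v₂ = 0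
  · subst h2
    rw [gaussianReal_zero_var, Measure.prod_dirac,
      Measure.map_map measurable_add (by fun_prop : Measurable fun x : ℝ => (x, (0:ℝ)))]
    simp only [Function.comp_def, add_zero, Measure.map_id']
  have hV : v₁ + v₂ ≠ 0 := by simp [h1]
  ext s hs
  rw [Measure.map_apply measurable_add hs,
    Measure.prod_apply (measurable_add hs)]
  have hinner : ∀ x : ℝ, (gaussianReal 0 v₂) (Prod.mk x ⁻¹' ((fun p : ℝ × ℝ => p.1 + p.2) ⁻¹' s))
      = ∫⁻ z in s, gaussianPDF 0 v₂ (z - x) := by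
    intro x
    have hset : (Prod.mk x ⁻¹' ((fun p : ℝ × ℝ => p.1 + p.2) ⁻¹' s)) = (fun y => x + y) ⁻¹' s := rfl
    rw [hset, gaussianReal_apply 0 h2,
      ← lintegral_indicator (measurable_const_add x hs),
      ← lintegral_indicator hs]
    calc ∫⁻ y, ((fun y => x + y) ⁻¹' s).indicator (gaussianPDF 0 v₂) y
        = ∫⁻ y, s.indicator (fun u => gaussianPDF 0 v₂ (u - x)) (y + x) := by
          congr 1; ext y
          by_cases hy : y + x ∈ s
          · have hy' : y ∈ (fun y => x + y) ⁻¹' s := by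
              simpa [Set.mem_preimage, add_comm] using hy
            simp [Set.indicator_of_mem, hy', hy, add_sub_cancel_right]
          · have hy' : y ∉ (fun y => x + y) ⁻¹' s := by
              simpa [Set.mem_preimage, add_comm] using hy
            simp [Set.indicator_of_notMem, hy', hy]
      _ = ∫⁻ y, s.indicator (fun u => gaussianPDF 0 v₂ (u - x)) y :=
          lintegral_add_right_eq_self _ x
  simp_rw [hinner]
  have hmeas2 : Measurable fun (p : ℝ × ℝ) => gaussianPDF 0 v₂ (p.2 - p.1) :=
    (measurable_gaussianPDF 0 v₂).comp (measurable_snd.sub measurable_fst)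
  have hmeasI : Measurable fun x => ∫⁻ z in s, gaussianPDF 0 v₂ (z - x) :=
    Measurable.lintegral_prod_right (f := fun x z => gaussianPDF 0 v₂ (z - x)) hmeas2
  rw [gaussianReal_of_var_ne_zero 0 h1,
    lintegral_withDensity_eq_lintegral_mul _ (measurable_gaussianPDF 0 v₁) hmeasI]
  have hx : ∀ x, (gaussianPDF 0 v₁ * fun x => ∫⁻ z in s, gaussianPDF 0 v₂ (z - x)) x
      = ∫⁻ z in s, gaussianPDF 0 v₁ x * gaussianPDF 0 v₂ (z - x) := fun x =>
    (lintegral_const_mul _ ((measurable_gaussianPDF 0 v₂).comp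
      (measurable_id.sub measurable_const))).symm
  rw [lintegral_congr hx, lintegral_lintegral_swap]
  · calc ∫⁻ z in s, ∫⁻ x, gaussianPDF 0 v₁ x * gaussianPDF 0 v₂ (z - x)
        = ∫⁻ z in s, gaussianPDF 0 (v₁ + v₂) z :=
          lintegral_congr fun z => lintegral_gaussianPDF_conv v₁ v₂ h1 h2 z
      _ = gaussianReal 0 (v₁ + v₂) s := (gaussianReal_apply 0 hV s).symm
  · exact (((measurable_gaussianPDF 0 v₁).comp measurable_fst).mul
      ((measurable_gaussianPDF 0 v₂).comp (measurable_snd.sub measurable_fst))).aemeasurable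

lemma std_comb_1d (a b : ℝ) (hab : a ^ 2 + b ^ 2 = 1) :
    Measure.map (fun p : ℝ × ℝ => a * p.1 + b * p.2)
      ((gaussianReal 0 1).prod (gaussianReal 0 1)) = gaussianReal 0 1 := by
  have hcomp : (fun p : ℝ × ℝ => a * p.1 + b * p.2)
      = (fun p : ℝ × ℝ => p.1 + p.2) ∘ (Prod.map (a * ·) (b * ·)) := rfl
  rw [hcomp, ← Measure.map_map measurable_add
      ((measurable_const_mul a).prodMap (measurable_const_mul b)),
    ← Measure.map_prod_map _ _ (measurable_const_mul a) (measurable_const_mul b),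
    gaussianReal_map_const_mul, gaussianReal_map_const_mul]
  simp only [mul_zero]
  rw [gaussianReal_conv]
  congr 1
  ext
  push_cast
  simpa using hab

lemma std_comb_pi (d : ℕ) (a b : ℝ) (hab : a ^ 2 + b ^ 2 = 1) :
    Measure.map (fun p : (Fin d → ℝ) × (Fin d → ℝ) => a • p.1 + b • p.2)
      ((Measure.pi fun _ : Fin d => gaussianReal 0 1).prod
        (Measure.pi fun _ : Fin d => gaussianReal 0 1))
      = Measure.pi fun _ : Fin d => gaussianReal 0 1 := by
  have h1 := measurePreserving_arrowProdEquivProdArrow ℝ ℝ (Fin d)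
    (fun _ => gaussianReal 0 1) (fun _ => gaussianReal 0 1)
  have h2 : MeasurePreserving (fun (w : Fin d → ℝ × ℝ) i => a * (w i).1 + b * (w i).2)
      (Measure.pi fun _ : Fin d => (gaussianReal 0 1).prod (gaussianReal 0 1))
      (Measure.pi fun _ : Fin d => gaussianReal 0 1) :=
    measurePreserving_pi _ _ (fun _ =>
      ⟨(measurable_const_mul a).comp measurable_fst |>.add
        ((measurable_const_mul b).comp measurable_snd), std_comb_1d a b hab⟩)
  have hmeas : Measurable (fun p : (Fin d → ℝ) × (Fin d → ℝ) => a • p.1 + b • p.2) := by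
    fun_prop
  rw [← h1.map_eq, Measure.map_map hmeas
    (MeasurableEquiv.arrowProdEquivProdArrow ℝ ℝ (Fin d)).measurable]
  have hco : (fun p : (Fin d → ℝ) × (Fin d → ℝ) => a • p.1 + b • p.2)
      ∘ (MeasurableEquiv.arrowProdEquivProdArrow ℝ ℝ (Fin d))
      = fun (w : Fin d → ℝ × ℝ) i => a * (w i).1 + b * (w i).2 := rfl
  rw [hco, h2.map_eq]

instance (d : ℕ) : IsProbabilityMeasure (stdGaussian d) :=
  Measure.isProbabilityMeasure_map (MeasurableEquiv.toLp 2 (Fin d → ℝ)).measurable.aemeasurable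

lemma std_comb (d : ℕ) (a b : ℝ) (hab : a ^ 2 + b ^ 2 = 1) :
    Measure.map (fun p : EuclideanSpace ℝ (Fin d) × EuclideanSpace ℝ (Fin d) =>
        a • p.1 + b • p.2)
      ((stdGaussian d).prod (stdGaussian d)) = stdGaussian d := by
  have hmeas : Measurable (fun p : EuclideanSpace ℝ (Fin d) × EuclideanSpace ℝ (Fin d) =>
      a • p.1 + b • p.2) := by fun_prop
  rw [_root_.stdGaussian]
  set e := MeasurableEquiv.toLp 2 (Fin d → ℝ) with he
  rw [Measure.map_prod_map _ _ e.measurable e.measurable,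
    Measure.map_map hmeas (e.measurable.prodMap e.measurable)]
  have hco : (fun p : EuclideanSpace ℝ (Fin d) × EuclideanSpace ℝ (Fin d) =>
        a • p.1 + b • p.2) ∘ (Prod.map e e)
      = e ∘ (fun p : (Fin d → ℝ) × (Fin d → ℝ) => a • p.1 + b • p.2) := rfl
  rw [hco, ← Measure.map_map e.measurable (by fun_prop), std_comb_pi d a b hab]

-- integrability of |x| under gaussianReal 0 1
lemma integrable_abs_gaussianReal : Integrable (fun x => |x|) (gaussianReal 0 (1 : ℝ≥0)) := by
  rw [gaussianReal_of_var_ne_zero 0 one_ne_zero]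
  rw [integrable_withDensity_iff (measurable_gaussianPDF 0 1)
    (ae_of_all _ fun x => ENNReal.ofReal_lt_top)]
  have : Integrable (fun x : ℝ => |x * rexp (-(2⁻¹ : ℝ) * x ^ 2)|) :=
    (integrable_mul_exp_neg_mul_sq (by norm_num)).abs
  refine (this.const_mul (√(2 * π * (1:ℝ≥0)))⁻¹).congr (ae_of_all _ fun x => ?_)
  simp only [gaussianPDF_def]
  rw [ENNReal.toReal_ofReal (gaussianPDFReal_nonneg _ _ _), gaussianPDFReal]
  rw [abs_mul, abs_of_pos (Real.exp_pos _)]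
  have : -(2⁻¹:ℝ) * x ^ 2 = -(x - 0) ^ 2 / (2 * (1:ℝ≥0)) := by push_cast; ring
  rw [this]
  ring

lemma pi_map_eval (d : ℕ) (i : Fin d) :
    (Measure.pi fun _ : Fin d => gaussianReal 0 1).map (Function.eval i)
      = gaussianReal 0 1 := by
  ext s hs
  rw [Measure.map_apply (measurable_pi_apply i) hs]
  rw [show (fun f : Fin d → ℝ => f i) ⁻¹' s
      = Set.pi Set.univ (Function.update (fun _ => Set.univ) i s) from Set.eval_preimage]
  rw [Measure.pi_pi]
  rw [Fintype.prod_eq_single i (fun j hj => by simp [Function.update_of_ne hj])]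
  simp

lemma integrable_eval_pi (d : ℕ) (i : Fin d) :
    Integrable (fun w : Fin d → ℝ => |w i|)
      (Measure.pi fun _ : Fin d => gaussianReal 0 1) := by
  have h := integrable_abs_gaussianReal
  rw [← pi_map_eval d i] at h
  exact (integrable_map_measure (measurable_abs.aestronglyMeasurable)
    (measurable_pi_apply i).aemeasurable).mp h

lemma integrable_norm_stdGaussian (d : ℕ) :
    Integrable (fun x : EuclideanSpace ℝ (Fin d) => ‖x‖) (stdGaussian d) := by
  rw [_root_.stdGaussian]
  rw [integrable_map_equiv]
  have hbound : ∀ w : Fin d → ℝ,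
      ‖MeasurableEquiv.toLp 2 (Fin d → ℝ) w‖ ≤ ∑ i, |w i| := by
    intro w
    rw [EuclideanSpace.norm_eq]
    calc √(∑ i, ‖MeasurableEquiv.toLp 2 (Fin d → ℝ) w i‖ ^ 2)
        = √(∑ i, |w i| ^ 2) := by
          congr 1
      _ ≤ √((∑ i, |w i|) ^ 2) := Real.sqrt_le_sqrt
          (Finset.sum_sq_le_sq_sum_of_nonneg fun i _ => abs_nonneg _)
      _ = ∑ i, |w i| := Real.sqrt_sq (Finset.sum_nonneg fun i _ => abs_nonneg _)
  have hint : Integrable (fun w : Fin d → ℝ => ∑ i, |w i|)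
      (Measure.pi fun _ : Fin d => gaussianReal 0 1) :=
    integrable_finset_sum _ fun i _ => integrable_eval_pi d i
  refine hint.mono (by fun_prop) (ae_of_all _ fun w => ?_)
  simp only [Function.comp_apply, Real.norm_eq_abs, abs_of_nonneg (norm_nonneg _)]
  exact (hbound w).trans (le_abs_self _)


lemma posSemidef_smul {n : Type*} [Fintype n] {M : Matrix n n ℝ} (hM : M.PosSemidef)
    {r : ℝ} (hr : 0 ≤ r) : (r • M).PosSemidef := by
  exact hM.smul hr

lemma measurable_gaussian_map {d : ℕ} (μ : EuclideanSpace ℝ (Fin d))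
    (M : Matrix (Fin d) (Fin d) ℝ) :
    Measurable (fun w => μ + Matrix.toEuclideanLin M w) := by
  have : Continuous (Matrix.toEuclideanLin M) := LinearMap.continuous_of_finiteDimensional _
  exact (continuous_const.add this).measurable

lemma integrable_lipschitz_gaussianMeasure {d : ℕ} (μ : EuclideanSpace ℝ (Fin d))
    {S : Matrix (Fin d) (Fin d) ℝ} (hS : S.PosSemidef)
    {f : EuclideanSpace ℝ (Fin d) → ℝ} (hlip : LipschitzWith 1 f) :
    Integrable f (gaussianMeasure μ hS) := by
  rw [gaussianMeasure_eq]
  set T := Matrix.toEuclideanLin hS.sqrt with hT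
  have hTc : Continuous T := LinearMap.continuous_of_finiteDimensional _
  set L : EuclideanSpace ℝ (Fin d) →L[ℝ] EuclideanSpace ℝ (Fin d) := ⟨T, hTc⟩ with hL
  have hφ : Measurable (fun w => μ + T w) := measurable_gaussian_map μ _
  rw [integrable_map_measure hlip.continuous.aestronglyMeasurable hφ.aemeasurable]
  have hdom : Integrable (fun w : EuclideanSpace ℝ (Fin d) => |f μ| + ‖L‖ * ‖w‖)
      (stdGaussian d) :=
    (integrable_const _).add ((integrable_norm_stdGaussian d).const_mul _)
  refine hdom.mono ((hlip.continuous.comp (continuous_const.add hTc)).aestronglyMeasurable)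
    (ae_of_all _ fun w => ?_)
  have h1 : |f (μ + T w) - f μ| ≤ ‖T w‖ := by
    have := hlip.dist_le_mul (μ + T w) μ
    rw [Real.dist_eq, dist_eq_norm] at this
    simpa using this
  have h2 : ‖T w‖ ≤ ‖L‖ * ‖w‖ := L.le_opNorm w
  rw [Real.norm_eq_abs, Function.comp_apply, Real.norm_eq_abs]
  have habs : |f (μ + T w)| ≤ |f μ| + |f (μ + T w) - f μ| := by
    calc |f (μ + T w)| = |f μ + (f (μ + T w) - f μ)| := by ring_nf
      _ ≤ |f μ| + |f (μ + T w) - f μ| := abs_add_le _ _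
  have hrhs : (0:ℝ) ≤ |f μ| + ‖L‖ * ‖w‖ := by positivity
  rw [abs_of_nonneg hrhs]
  linarith

open scoped MatrixOrder in
lemma gaussianMeasure_comb {d : ℕ} (μ : EuclideanSpace ℝ (Fin d))
    {S : Matrix (Fin d) (Fin d) ℝ} (hS : S.PosSemidef)
    (l : ℝ) (hl0 : 0 < l) (hl1 : l < 1)
    (hS2 : (((2 - l) / l) • S).PosSemidef) :
    Measure.map
        (fun q : EuclideanSpace ℝ (Fin d) × EuclideanSpace ℝ (Fin d) =>
          (1 - l) • q.1 + l • q.2)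
        ((gaussianMeasure μ hS).prod (gaussianMeasure μ hS2)) = gaussianMeasure μ hS := by
  have hpos : (0:ℝ) ≤ (2 - l) / l := div_nonneg (by linarith) hl0.le
  set r : ℝ := √((2 - l) / l) with hr_def
  have hr2 : r ^ 2 = (2 - l) / l := Real.sq_sqrt hpos
  have hab : (1 - l) ^ 2 + (l * r) ^ 2 = 1 := by
    rw [mul_pow, hr2]
    field_simp
    ring
  have hsqrt : hS2.sqrt = r • hS.sqrt := by
    rw [hS2.sqrt_eq_cfc', hS.sqrt_eq_cfc']
    refine CFC.sqrt_unique ?_ ((Matrix.nonneg_iff_posSemidef.mp (CFC.sqrt_nonneg S)).smul (Real.sqrt_nonneg _)).nonneg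
    rw [smul_mul_smul_comm, CFC.sqrt_mul_sqrt_self S hS.nonneg, ← pow_two, hr2]
  have hT2 : Matrix.toEuclideanLin hS2.sqrt = r • Matrix.toEuclideanLin hS.sqrt := by
    rw [hsqrt]
    exact _root_.map_smul (Matrix.toEuclideanLin (𝕜 := ℝ)) r hS.sqrt
  have hφ₁ : Measurable (fun w => μ + Matrix.toEuclideanLin hS.sqrt w) :=
    measurable_gaussian_map μ _
  have hφ₂ : Measurable (fun w => μ + Matrix.toEuclideanLin hS2.sqrt w) :=
    measurable_gaussian_map μ _
  have hcomb : Measurable (fun q : EuclideanSpace ℝ (Fin d) × EuclideanSpace ℝ (Fin d) =>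
      (1 - l) • q.1 + l • q.2) := by fun_prop
  have hcomb0 : Measurable (fun p : EuclideanSpace ℝ (Fin d) × EuclideanSpace ℝ (Fin d) =>
      (1 - l) • p.1 + (l * r) • p.2) := by fun_prop
  have hcompose : (fun q : EuclideanSpace ℝ (Fin d) × EuclideanSpace ℝ (Fin d) =>
        (1 - l) • q.1 + l • q.2)
        ∘ (Prod.map (fun w => μ + Matrix.toEuclideanLin hS.sqrt w)
            (fun w => μ + Matrix.toEuclideanLin hS2.sqrt w))
      = (fun w => μ + Matrix.toEuclideanLin hS.sqrt w)
        ∘ (fun p : EuclideanSpace ℝ (Fin d) × EuclideanSpace ℝ (Fin d) =>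
            (1 - l) • p.1 + (l * r) • p.2) := by
    funext p
    obtain ⟨p1, p2⟩ := p
    simp only [Function.comp_apply, Prod.map_apply, hT2, LinearMap.smul_apply, smul_add,
      _root_.map_add, _root_.map_smul, smul_smul]
    have hμ : (1 - l) • μ + l • μ = μ := by
      rw [← add_smul]
      simp
    calc (1 - l) • μ + (1 - l) • Matrix.toEuclideanLin hS.sqrt p1
          + (l • μ + (l * r) • Matrix.toEuclideanLin hS.sqrt p2)
        = ((1 - l) • μ + l • μ) + ((1 - l) • Matrix.toEuclideanLin hS.sqrt p1
          + (l * r) • Matrix.toEuclideanLin hS.sqrt p2) := by abel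
      _ = μ + ((1 - l) • Matrix.toEuclideanLin hS.sqrt p1
          + (l * r) • Matrix.toEuclideanLin hS.sqrt p2) := by rw [hμ]
  rw [gaussianMeasure_eq, gaussianMeasure_eq,
    Measure.map_prod_map _ _ hφ₁ hφ₂,
    Measure.map_map hcomb (hφ₁.prodMap hφ₂), hcompose,
    ← Measure.map_map hφ₁ hcomb0, std_comb d (1 - l) (l * r) hab]


instance {d : ℕ} (μ : EuclideanSpace ℝ (Fin d)) {S : Matrix (Fin d) (Fin d) ℝ}
    (hS : S.PosSemidef) : IsProbabilityMeasure (gaussianMeasure μ hS) :=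
  Measure.isProbabilityMeasure_map (measurable_gaussian_map μ _).aemeasurable

theorem surrogate_expectation {d : ℕ} (μ : EuclideanSpace ℝ (Fin d))
    {S : Matrix (Fin d) (Fin d) ℝ} (hS : S.PosSemidef)
    (l : ℝ) (hl0 : 0 < l) (hl1 : l < 1)
    (hS2 : (((2 - l) / l) • S).PosSemidef)
    (f : EuclideanSpace ℝ (Fin d) → ℝ)
    (hconv : ConvexOn ℝ Set.univ f) (hlip : LipschitzWith 1 f) :
    Measure.map
        (fun q : EuclideanSpace ℝ (Fin d) × EuclideanSpace ℝ (Fin d) =>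
          (1 - l) • q.1 + l • q.2)
        ((gaussianMeasure μ hS).prod (gaussianMeasure μ hS2)) = gaussianMeasure μ hS ∧
      ∫ z, (∫ x, ((1 - 1 / l) * f x + (1 / l) * f ((1 - l) • x + l • z))
          ∂(gaussianMeasure μ hS)) ∂(gaussianMeasure μ hS2)
        = ∫ x, f x ∂(gaussianMeasure μ hS) := by
  refine ⟨gaussianMeasure_comb μ hS l hl0 hl1 hS2, ?_⟩
  set ν₁ := gaussianMeasure μ hS with hν₁
  set ν₂ := gaussianMeasure μ hS2 with hν₂
  set ν := ν₂.prod ν₁ with hν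
  have hf_cont : Continuous f := hlip.continuous
  have hint1 : Integrable f ν₁ := integrable_lipschitz_gaussianMeasure μ hS hlip
  have hcomb' : Measurable (fun p : EuclideanSpace ℝ (Fin d) × EuclideanSpace ℝ (Fin d) =>
      (1 - l) • p.2 + l • p.1) := by fun_prop
  have hmap' : ν.map (fun p : EuclideanSpace ℝ (Fin d) × EuclideanSpace ℝ (Fin d) =>
      (1 - l) • p.2 + l • p.1) = ν₁ := by
    have hswap : ν = (ν₁.prod ν₂).map Prod.swap := (Measure.prod_swap).symm
    rw [hswap, Measure.map_map hcomb' measurable_swap]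
    exact gaussianMeasure_comb μ hS l hl0 hl1 hS2
  have hsnd : ν.map Prod.snd = ν₁ := by
    rw [Measure.map_snd_prod, measure_univ, one_smul]
  have hGint1 : Integrable (fun p : EuclideanSpace ℝ (Fin d) × EuclideanSpace ℝ (Fin d) =>
      f p.2) ν := by
    have := hint1
    rw [← hsnd] at this
    exact (integrable_map_measure hf_cont.aestronglyMeasurable
      measurable_snd.aemeasurable).mp this
  have hGint2 : Integrable (fun p : EuclideanSpace ℝ (Fin d) × EuclideanSpace ℝ (Fin d) =>
      f ((1 - l) • p.2 + l • p.1)) ν := by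
    have := hint1
    rw [← hmap'] at this
    exact (integrable_map_measure hf_cont.aestronglyMeasurable hcomb'.aemeasurable).mp this
  have hG : Integrable (fun p : EuclideanSpace ℝ (Fin d) × EuclideanSpace ℝ (Fin d) =>
      (1 - 1 / l) * f p.2 + (1 / l) * f ((1 - l) • p.2 + l • p.1)) ν :=
    (hGint1.const_mul _).add (hGint2.const_mul _)
  have hfub : ∫ z, (∫ x, ((1 - 1 / l) * f x + (1 / l) * f ((1 - l) • x + l • z)) ∂ν₁) ∂ν₂
      = ∫ p, ((1 - 1 / l) * f p.2 + (1 / l) * f ((1 - l) • p.2 + l • p.1)) ∂ν :=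
    integral_integral hG
  rw [hfub, integral_add (hGint1.const_mul _) (hGint2.const_mul _),
    integral_const_mul, integral_const_mul]
  have he1 : ∫ p, f p.2 ∂ν = ∫ x, f x ∂ν₁ := by
    rw [← hsnd, integral_map measurable_snd.aemeasurable hf_cont.aestronglyMeasurable]
  have he2 : ∫ p, f ((1 - l) • p.2 + l • p.1) ∂ν = ∫ x, f x ∂ν₁ := by
    rw [← hmap', integral_map hcomb'.aemeasurable hf_cont.aestronglyMeasurable]
  rw [he1, he2]
  ring

end Aux
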